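/- For every prime power q, there exists a Hamiltonian graph on q^2 + q + 1 vertices with exactly q^2 + 2q edges in which no two cycles have the same length. -/

import Mathlib

/-- The cycle `C_n` on vertex set `Fin n`, where label `i` represents the integer `i + 1`;
edges join consecutive integers mod `n` (i.e. `{i, i+1}` for `1 ≤ i ≤ n - 1` and `{n, 1}`). -/
def cycG (n : ℕ) : SimpleGraph (Fin n) :=
  SimpleGraph.fromRel (fun i j => (i.val + 1) % n = j.val)

/-- The graph `G_n(S)`: the cycle `C_n` together with a chord `{1, a}` for each `a ∈ S`
(vertex label `i` represents the integer `i + 1`, so the integer vertex `1` is label `0`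
and the integer vertex `a` is label `a - 1`). -/
def GnS (n : ℕ) (S : Finset ℕ) : SimpleGraph (Fin n) :=
  SimpleGraph.fromRel (fun i j => (i.val + 1) % n = j.val ∨ (i.val = 0 ∧ j.val + 1 ∈ S))

/-- A graph on a finite vertex type is Hamiltonian if it has a cycle through all vertices,
i.e. a cycle whose length equals the number of vertices. -/
def IsHamiltonianGraph {V : Type*} [Fintype V] (G : SimpleGraph V) : Prop :=
  ∃ (u : V) (p : G.Walk u u), p.IsCycle ∧ p.length = Fintype.card V

/-- No two cycles of `G` have the same length: any two cycles with equal length are the same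
cycle, i.e. have the same edge set. -/
def NoRepeatedCycleLength {V : Type*} (G : SimpleGraph V) : Prop :=
  ∀ (u v : V) (p : G.Walk u u) (q : G.Walk v v),
    p.IsCycle → q.IsCycle → p.length = q.length →
      {e | e ∈ p.edges} = {e | e ∈ q.edges}

open Finset

theorem sidon_core (F : Type) [Field F] [Fintype F] [DecidableEq F]
    (q : ℕ) (hq2 : 2 ≤ q) (hcard : Fintype.card F = q ^ 3)
    (hfrob : ∀ x y : F, (x + y) ^ q = x ^ q + y ^ q) :
    ∃ S : Finset ℕ, S.card = q + 1 ∧ (∀ a ∈ S, 2 ≤ a ∧ a ≤ q ^ 2 + q + 1) ∧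
      2 ∈ S ∧ q ^ 2 + q + 1 ∈ S ∧
      (∀ a ∈ S, ∀ b ∈ S, ∀ c ∈ S, ∀ d ∈ S,
        a < b → c < d → b - a = d - c → a = c ∧ b = d) := by
  classical
  set n : ℕ := q ^ 2 + q + 1 with hn
  set N : ℕ := q ^ 3 - 1 with hN
  have hn7 : 7 ≤ n := by nlinarith
  have hnpos : 0 < n := by omega
  have hq1 : 1 ≤ q - 1 := by omega
  have hNn : N = n * (q - 1) := by
    obtain ⟨m, rfl⟩ : ∃ m, q = m + 2 := ⟨q - 2, by omega⟩
    have : (m + 2) ^ 3 = ((m + 2) ^ 2 + (m + 2) + 1) * (m + 1) + 1 := by ring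
    simp only [hN, hn, this]
    have : m + 2 - 1 = m + 1 := by omega
    rw [this]; omega
  have hNpos : 0 < N := by
    rw [hNn]; exact Nat.mul_pos hnpos (by omega)
  -- generator
  obtain ⟨g, hg⟩ := IsCyclic.exists_generator (α := Fˣ)
  have horder : orderOf g = N := by
    rw [orderOf_eq_card_of_forall_mem_zpowers hg, Nat.card_eq_fintype_card,
      Fintype.card_units, hcard]
  have horderF : orderOf ((g : F)) = N := by rw [orderOf_units, horder]
  have gne : ∀ i : ℕ, (g : F) ^ i ≠ 0 := fun i => pow_ne_zero i (Units.ne_zero g)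
  have E1 : ∀ i j : ℕ, (g : F) ^ i = (g : F) ^ j ↔ i ≡ j [MOD N] := by
    intro i j
    rw [← Units.val_pow_eq_pow_val, ← Units.val_pow_eq_pow_val, Units.val_inj,
      pow_eq_pow_iff_modEq, horder]
  have hrep : ∀ x : F, x ≠ 0 → ∃ m, m < N ∧ (g : F) ^ m = x := by
    intro x hx
    lift x to Fˣ using isUnit_iff_ne_zero.mpr hx
    obtain ⟨m, hm⟩ := mem_powers_iff_mem_zpowers.mpr (hg x)
    simp only at hm
    refine ⟨m % N, Nat.mod_lt _ hNpos, ?_⟩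
    have h2 := pow_mod_orderOf g m
    rw [horder] at h2
    rw [← Units.val_pow_eq_pow_val, h2, hm]
  -- the subfield predicate
  set Kp : F → Prop := fun x => x ^ q = x with hKp
  have Kmul : ∀ x y, Kp x → Kp y → Kp (x * y) := by
    intro x y hx hy; simp only [hKp, mul_pow]; rw [hx, hy]
  have Kone : Kp 1 := by simp [hKp]
  have Kzero : Kp 0 := by simp only [hKp]; exact zero_pow (by omega)
  have Ksub : ∀ x y, Kp x → Kp y → Kp (x - y) := by
    intro x y hx hy
    have h := hfrob (x - y) y
    simp only [hKp] at hx hy ⊢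
    rw [sub_add_cancel, hx, hy] at h
    linear_combination -h
  have Kadd : ∀ x y, Kp x → Kp y → Kp (x + y) := by
    intro x y hx hy
    simp only [hKp] at hx hy ⊢
    rw [hfrob, hx, hy]
  have Kinv : ∀ x, Kp x → Kp x⁻¹ := by
    intro x hx
    simp only [hKp] at hx ⊢
    rw [inv_pow, hx]
  -- exponent characterization of Kp on powers of g
  have E2 : ∀ i : ℕ, Kp ((g : F) ^ i) ↔ n ∣ i := by
    intro i
    have hle : i ≤ i * q := Nat.le_mul_of_pos_right _ (by omega)
    have hiq : i * q - i = i * (q - 1) := by rw [Nat.mul_sub, mul_one]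
    simp only [hKp, ← pow_mul]
    rw [E1]
    constructor
    · intro h
      have hd := (Nat.modEq_iff_dvd' hle).mp h.symm
      rw [hiq, hNn, mul_comm n (q - 1), mul_comm i (q - 1)] at hd
      exact (Nat.mul_dvd_mul_iff_left (show 0 < q - 1 by omega)).mp hd
    · rintro ⟨t, rfl⟩
      refine ((Nat.modEq_iff_dvd' hle).mpr ?_).symm
      rw [hiq, hNn]
      exact ⟨t, by ring⟩
  
  have Kdiv : ∀ x y, Kp x → Kp y → Kp (x * y⁻¹) := fun x y hx hy => Kmul _ _ hx (Kinv _ hy)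
  have Kneg : ∀ x, Kp x → Kp (-x) := by
    intro x hx; have := Ksub 0 x Kzero hx; simpa using this
  have Kn : ∀ t : ℕ, Kp ((g : F) ^ (n * t)) := fun t => (E2 _).mpr ⟨t, rfl⟩
  have L1 : ∀ (μ : F) (i j : ℕ), i < n → j < n → Kp μ → μ ≠ 0 →
      (g : F) ^ i = μ * (g : F) ^ j → i = j := by
    intro μ i j hi hj hμ hμ0 hE
    obtain ⟨m, hm, rfl⟩ := hrep μ hμ0
    obtain ⟨t, rfl⟩ := (E2 m).mp hμ
    rw [← pow_add] at hE
    have h1 := (E1 _ _).mp hE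
    have h2 : i ≡ n * t + j [MOD n] := Nat.ModEq.of_dvd ⟨q - 1, hNn⟩ h1
    rw [Nat.ModEq, Nat.mul_add_mod, Nat.mod_eq_of_lt hi, Nat.mod_eq_of_lt hj] at h2
    exact h2
  set KS : Finset F := univ.filter Kp with hKS
  have memKS : ∀ x, x ∈ KS ↔ Kp x := by intro x; simp [hKS]
  have hKSdesc : KS = insert 0 ((range (q - 1)).image fun i => (g : F) ^ (n * i)) := by
    ext x
    simp only [memKS, mem_insert, mem_image, mem_range]
    constructor
    · intro hx
      by_cases h0 : x = 0
      · left; exact h0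
      · right
        obtain ⟨m, hm, rfl⟩ := hrep x h0
        obtain ⟨t, rfl⟩ := (E2 m).mp hx
        refine ⟨t, ?_, rfl⟩
        by_contra hle
        push_neg at hle
        have h3 : n * (q - 1) ≤ n * t := Nat.mul_le_mul_left n hle
        rw [← hNn] at h3
        omega
    · rintro (rfl | ⟨t, ht, rfl⟩)
      · exact Kzero
      · exact Kn t
  have cardKS : KS.card = q := by
    rw [hKSdesc, card_insert_of_notMem, card_image_of_injOn, card_range]
    · omega
    · intro a ha b hb hab
      simp only [coe_range, Set.mem_Iio] at ha hb
      have h1 := (E1 _ _).mp hab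
      have hb1 : ∀ c : ℕ, c < q - 1 → n * c < N := by
        intro c hc
        rw [hNn]
        have h4 := Nat.mul_le_mul_left n (show c + 1 ≤ q - 1 from hc)
        rw [Nat.mul_succ] at h4
        omega
      rw [Nat.ModEq, Nat.mod_eq_of_lt (hb1 a ha), Nat.mod_eq_of_lt (hb1 b hb)] at h1
      exact Nat.eq_of_mul_eq_mul_left hnpos h1
    · simp only [mem_image, mem_range, not_exists]
      intro t
      intro h
      exact gne _ h.2
  have IND : ∀ c0 c1 c2 : F, Kp c0 → Kp c1 → Kp c2 →
      c0 + c1 * (g : F) + c2 * (g : F) ^ 2 = 0 → c0 = 0 ∧ c1 = 0 ∧ c2 = 0 := by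
    intro c0 c1 c2 h0 h1 h2 heq
    have hc2 : c2 = 0 := by
      by_contra hc2
      set e : F := -(c0 * c2⁻¹) with he
      set f : F := -(c1 * c2⁻¹) with hf
      have hKe : Kp e := Kneg _ (Kdiv _ _ h0 h2)
      have hKf : Kp f := Kneg _ (Kdiv _ _ h1 h2)
      have hce : c2 * e = -c0 := by
        rw [he, mul_neg, mul_comm c0 c2⁻¹, ← mul_assoc, mul_inv_cancel₀ hc2, one_mul]
      have hcf : c2 * f = -c1 := by
        rw [hf, mul_neg, mul_comm c1 c2⁻¹, ← mul_assoc, mul_inv_cancel₀ hc2, one_mul]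
      have hg2 : (g : F) ^ 2 = e + f * (g : F) := by
        apply mul_left_cancel₀ hc2
        linear_combination heq - hce - (g : F) * hcf
      have aux : ∀ m : ℕ, ∃ a b : F, Kp a ∧ Kp b ∧ (g : F) ^ m = a + b * (g : F) := by
        intro m
        induction m with
        | zero => exact ⟨1, 0, Kone, Kzero, by simp⟩
        | succ m ih =>
          obtain ⟨a, b, ha, hb, hm⟩ := ih
          refine ⟨b * e, a + b * f, Kmul _ _ hb hKe, Kadd _ _ ha (Kmul _ _ hb hKf), ?_⟩
          rw [pow_succ, hm]
          linear_combination (b : F) * hg2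
      have hsub : (univ : Finset F) ⊆ (KS ×ˢ KS).image fun ab => ab.1 + ab.2 * (g : F) := by
        intro x _
        rcases eq_or_ne x 0 with rfl | hx
        · exact mem_image.mpr ⟨(0,0), by rw [mem_product]; exact ⟨(memKS _).mpr Kzero, (memKS _).mpr Kzero⟩, by simp⟩
        · obtain ⟨m, _, rfl⟩ := hrep x hx
          obtain ⟨a, b, ha, hb, hm⟩ := aux m
          exact mem_image.mpr ⟨(a,b), by rw [mem_product]; exact ⟨(memKS _).mpr ha, (memKS _).mpr hb⟩, hm.symm⟩
      have hcard2 := card_le_card hsub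
      rw [card_univ, hcard] at hcard2
      have hcard3 : ((KS ×ˢ KS).image fun ab : F × F => ab.1 + ab.2 * (g:F)).card ≤ q * q :=
        le_trans card_image_le (by rw [card_product, cardKS])
      nlinarith
    rw [hc2] at heq
    simp only [zero_mul, add_zero] at heq
    have hc1 : c1 = 0 := by
      by_contra hc1
      have hgk : Kp (g : F) := by
        have hgeq : (g : F) = -(c0 * c1⁻¹) := by
          field_simp
          linear_combination heq
        rw [hgeq]; exact Kneg _ (Kdiv _ _ h0 h1)
      have aux2 : ∀ m : ℕ, Kp ((g : F) ^ m) := by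
        intro m
        induction m with
        | zero => simpa using Kone
        | succ m ih => rw [pow_succ]; exact Kmul _ _ ih hgk
      have hsub : (univ : Finset F) ⊆ insert 0 KS := by
        intro x _
        rcases eq_or_ne x 0 with rfl | hx
        · exact mem_insert_self _ _
        · obtain ⟨m, _, rfl⟩ := hrep x hx
          exact mem_insert_of_mem ((memKS _).mpr (aux2 m))
      have hcard2 := card_le_card hsub
      rw [card_univ, hcard] at hcard2
      have hcard3 := card_insert_le (0:F) KS
      rw [cardKS] at hcard3
      nlinarith
    rw [hc1] at heq
    simp only [zero_mul, add_zero] at heq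
    exact ⟨heq, hc1, hc2⟩
  
  -- the Sidon residue set A
  set A : Finset ℕ := (range n).filter
      (fun i => ∃ a b : F, Kp a ∧ Kp b ∧ (g:F)^i = a + b*(g:F)) with hA
  have memA : ∀ i, i ∈ A ↔ i < n ∧ ∃ a b : F, Kp a ∧ Kp b ∧ (g:F)^i = a + b*(g:F) := by
    intro i; simp [hA]
  set T : Finset F := univ.filter
      (fun x => x ≠ 0 ∧ ∃ a b : F, Kp a ∧ Kp b ∧ x = a + b*(g:F)) with hT
  have memT : ∀ x, x ∈ T ↔ x ≠ 0 ∧ ∃ a b : F, Kp a ∧ Kp b ∧ x = a + b*(g:F) := by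
    intro x; simp [hT]
  have cardT : T.card = q^2 - 1 := by
    have hinj : Set.InjOn (fun ab : F × F => ab.1 + ab.2 * (g:F)) ↑(KS ×ˢ KS) := by
      intro x hx y hy hxy
      simp only [mem_coe, mem_product, memKS] at hx hy
      simp only at hxy
      have hdiff : (x.1 - y.1) + (x.2 - y.2) * (g:F) + 0 * (g:F)^2 = 0 := by
        linear_combination hxy
      obtain ⟨e1, e2, _⟩ := IND _ _ _ (Ksub _ _ hx.1 hy.1) (Ksub _ _ hx.2 hy.2) Kzero hdiff
      exact Prod.ext (sub_eq_zero.mp e1) (sub_eq_zero.mp e2)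
    have himg : (KS ×ˢ KS).image (fun ab : F × F => ab.1 + ab.2 * (g:F)) = insert 0 T := by
      ext x
      simp only [mem_image, mem_product, memKS, mem_insert, memT]
      constructor
      · rintro ⟨⟨a, b⟩, ⟨ha, hb⟩, rfl⟩
        simp only
        rcases eq_or_ne (a + b * (g:F)) 0 with h | h
        · left; exact h
        · right; exact ⟨h, a, b, ha, hb, rfl⟩
      · rintro (rfl | ⟨_, a, b, ha, hb, rfl⟩)
        · exact ⟨(0,0), ⟨Kzero, Kzero⟩, by simp⟩
        · exact ⟨(a,b), ⟨ha, hb⟩, rfl⟩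
    have h1 : ((KS ×ˢ KS).image (fun ab : F × F => ab.1 + ab.2 * (g:F))).card = q * q := by
      rw [card_image_of_injOn hinj, card_product, cardKS]
    rw [himg, card_insert_of_notMem (by simp [memT])] at h1
    have : q * q = q ^ 2 := by ring
    omega
  -- discrete log mod n
  set ind : F → ℕ := fun x =>
    if h : ∃ m, m < N ∧ (g:F)^m = x then h.choose % n else 0 with hind
  have indval : ∀ (x : F) (hx : x ≠ 0), ind x = (hrep x hx).choose % n := by
    intro x hx
    rw [hind]
    exact dif_pos (hrep x hx)
  have Kpow : ∀ c : F, Kp c → c ≠ 0 → ∃ s, c = (g:F)^(n*s) := by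
    intro c hc h0
    obtain ⟨m, hm, rfl⟩ := hrep c h0
    obtain ⟨s, rfl⟩ := (E2 m).mp hc
    exact ⟨s, rfl⟩
  have indspec : ∀ (x : F) (i : ℕ), i < n → (∃ c : F, Kp c ∧ c ≠ 0 ∧ x = c * (g:F)^i) →
      ind x = i := by
    rintro x i hi ⟨c, hc, hc0, rfl⟩
    obtain ⟨s, rfl⟩ := Kpow c hc hc0
    have hx : (g:F)^(n*s) * (g:F)^i ≠ 0 := mul_ne_zero (gne _) (gne _)
    rw [indval _ hx]
    have hms := (hrep _ hx).choose_spec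
    have h1 : (hrep _ hx).choose ≡ n * s + i [MOD N] :=
      (E1 _ _).mp (hms.2.trans (pow_add (g:F) (n*s) i).symm)
    have h2 : (hrep _ hx).choose % n = (n * s + i) % n :=
      Nat.ModEq.of_dvd ⟨q - 1, hNn⟩ h1
    rw [Nat.mul_add_mod, Nat.mod_eq_of_lt hi] at h2
    exact h2
  have indT : ∀ x ∈ T, (ind x ∈ A ∧ ∃ c : F, Kp c ∧ c ≠ 0 ∧ x = c * (g:F)^(ind x)) := by
    intro x hx
    obtain ⟨hx0, a, b, ha, hb, hab⟩ := (memT x).mp hx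
    obtain ⟨m, hm, hgm⟩ := hrep x hx0
    have hmd := Nat.div_add_mod m n
    set t := m / n
    set r := m % n with hr
    have hrn : r < n := Nat.mod_lt _ hnpos
    have hxrep : x = (g:F)^(n*t) * (g:F)^r := by rw [← pow_add, hmd, hgm]
    have hindx : ind x = r := indspec x r hrn ⟨(g:F)^(n*t), Kn t, gne _, hxrep⟩
    rw [hindx]
    constructor
    · rw [memA]
      refine ⟨hrn, ((g:F)^(n*t))⁻¹ * a, ((g:F)^(n*t))⁻¹ * b,
        Kmul _ _ (Kinv _ (Kn t)) ha, Kmul _ _ (Kinv _ (Kn t)) hb, ?_⟩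
      have h5 : (g:F)^r = ((g:F)^(n*t))⁻¹ * x := by
        rw [hxrep, ← mul_assoc, inv_mul_cancel₀ (gne _), one_mul]
      rw [h5, hab]
      ring
    · exact ⟨(g:F)^(n*t), Kn t, gne _, hxrep⟩
  have fiberEq : ∀ i ∈ A, T.filter (fun x => ind x = i)
      = (KS.erase 0).image (fun c => c * (g:F)^i) := by
    intro i hi
    obtain ⟨hin, a, b, ha, hb, hab⟩ := (memA i).mp hi
    ext x
    simp only [mem_filter, mem_image, mem_erase, memKS]
    constructor
    · rintro ⟨hxT, hix⟩
      obtain ⟨_, c, hc, hc0, hrep'⟩ := indT x hxT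
      exact ⟨c, ⟨hc0, hc⟩, by rw [← hix, ← hrep']⟩
    · rintro ⟨c, ⟨hc0, hc⟩, rfl⟩
      refine ⟨?_, indspec _ i hin ⟨c, hc, hc0, rfl⟩⟩
      rw [memT]
      refine ⟨mul_ne_zero hc0 (gne _), c * a, c * b, Kmul _ _ hc ha, Kmul _ _ hc hb, ?_⟩
      rw [hab]; ring
  have cardA : A.card = q + 1 := by
    have hfib := Finset.card_eq_sum_card_fiberwise (f := ind) (s := T) (t := A)
      (fun x hx => (indT x hx).1)
    have hconst : ∀ i ∈ A, (T.filter (fun x => ind x = i)).card = q - 1 := by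
      intro i hi
      rw [fiberEq i hi, card_image_of_injOn, card_erase_of_mem ((memKS 0).mpr Kzero), cardKS]
      intro c hc c' hc' hcc
      simp only at hcc
      exact mul_right_cancel₀ (gne i) hcc
    rw [Finset.sum_congr rfl hconst, Finset.sum_const, smul_eq_mul, cardT] at hfib
    have hq21 : (q+1) * (q-1) + 1 = q^2 := by
      obtain ⟨m, rfl⟩ : ∃ m, q = m + 2 := ⟨q - 2, by omega⟩
      have h1 : m + 2 - 1 = m + 1 := by omega
      rw [h1]; ring
    have hfib2 : A.card * (q-1) = (q+1) * (q-1) := by omega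
    exact Nat.eq_of_mul_eq_mul_right (by omega) hfib2
  
  -- proportionality helper
  have prop : ∀ (u v : ℕ) (au bu av bv : F), u < n → v < n →
      Kp au → Kp bu → Kp av → Kp bv →
      (g:F)^u = au + bu*(g:F) → (g:F)^v = av + bv*(g:F) →
      au * bv = av * bu → u = v := by
    intro u v au bu av bv hun hvn hKau hKbu hKav hKbv hxu hxv hpr
    by_cases hbv : bv = 0
    · have hav : av ≠ 0 := by
        intro h
        rw [hbv, h] at hxv
        simp only [zero_mul, mul_zero, add_zero, zero_add] at hxv
        exact gne v hxv
      have hbu : bu = 0 := by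
        rw [hbv, mul_zero] at hpr
        rcases mul_eq_zero.mp hpr.symm with h | h
        · exact absurd h hav
        · exact h
      have hau : au ≠ 0 := by
        intro h
        rw [hbu, h] at hxu
        simp only [zero_mul, mul_zero, add_zero, zero_add] at hxu
        exact gne u hxu
      apply L1 (au * av⁻¹) u v hun hvn (Kdiv _ _ hKau hKav)
        (mul_ne_zero hau (inv_ne_zero hav))
      rw [hxu, hxv, hbu, hbv]
      field_simp
      ring
    · have hbu : bu ≠ 0 := by
        intro h
        rw [h, mul_zero] at hpr
        rcases mul_eq_zero.mp hpr with h2 | h2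
        · rw [h, h2] at hxu
          simp only [zero_mul, mul_zero, add_zero, zero_add] at hxu
          exact gne u hxu
        · exact absurd h2 hbv
      have h2 : bu * bv⁻¹ * av = au := by
        apply mul_right_cancel₀ hbv
        calc bu * bv⁻¹ * av * bv = av * bu * (bv⁻¹ * bv) := by ring
        _ = av * bu := by rw [inv_mul_cancel₀ hbv, mul_one]
        _ = au * bv := hpr.symm
      have hmuv : (bu * bv⁻¹) * (av + bv*(g:F)) = au + bu*(g:F) := by
        rw [mul_add, h2]
        congr 1
        rw [← mul_assoc, mul_assoc bu bv⁻¹ bv, inv_mul_cancel₀ hbv, mul_one]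
      apply L1 (bu * bv⁻¹) u v hun hvn (Kdiv _ _ hKbu hKbv)
        (mul_ne_zero hbu (inv_ne_zero hbv))
      rw [hxu, hxv, hmuv]
  -- the core Sidon property
  have core : ∀ i j i' j' t : ℕ, i ∈ A → j ∈ A → i' ∈ A → j' ∈ A → i ≠ j →
      i + j' = i' + j + n * t → i = i' ∧ j = j' := by
    intro i j i' j' t hi hj hi' hj' hij heq
    obtain ⟨hin, a1, b1, ha1, hb1, hx1⟩ := (memA i).mp hi
    obtain ⟨hjn, a2, b2, ha2, hb2, hx2⟩ := (memA j).mp hj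
    obtain ⟨hin', a3, b3, ha3, hb3, hx3⟩ := (memA i').mp hi'
    obtain ⟨hjn', a4, b4, ha4, hb4, hx4⟩ := (memA j').mp hj'
    set lam : F := (g:F)^(n*t) with hlam
    have hKlam : Kp lam := Kn t
    have hlam0 : lam ≠ 0 := gne _
    have hE0 : (g:F)^i * (g:F)^(j') = lam * ((g:F)^(i') * (g:F)^j) := by
      rw [hlam, ← pow_add, ← pow_add, ← pow_add, heq]
      congr 1
      omega
    have hE : (a1 + b1*(g:F)) * (a4 + b4*(g:F))
        = lam * ((a3 + b3*(g:F)) * (a2 + b2*(g:F))) := by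
      rw [← hx1, ← hx4, ← hx3, ← hx2]
      exact hE0
    have hd : (a1*a4 - lam*(a3*a2)) + (a1*b4 + b1*a4 - lam*(a3*b2 + b3*a2)) * (g:F)
        + (b1*b4 - lam*(b3*b2)) * (g:F)^2 = 0 := by linear_combination hE
    obtain ⟨e0, e1, e2⟩ := IND _ _ _
      (Ksub _ _ (Kmul _ _ ha1 ha4) (Kmul _ _ hKlam (Kmul _ _ ha3 ha2)))
      (Ksub _ _ (Kadd _ _ (Kmul _ _ ha1 hb4) (Kmul _ _ hb1 ha4))
        (Kmul _ _ hKlam (Kadd _ _ (Kmul _ _ ha3 hb2) (Kmul _ _ hb3 ha2))))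
      (Ksub _ _ (Kmul _ _ hb1 hb4) (Kmul _ _ hKlam (Kmul _ _ hb3 hb2))) hd
    have q0 : a1*a4 = lam*(a3*a2) := sub_eq_zero.mp e0
    have q1 : a1*b4 + b1*a4 = lam*(a3*b2 + b3*a2) := sub_eq_zero.mp e1
    have q2 : b1*b4 = lam*(b3*b2) := sub_eq_zero.mp e2
    by_cases hb1' : b1 = 0
    · -- first column constant
      have hgi : (g:F)^i = a1 := by rw [hx1, hb1']; ring
      have ha10 : a1 ≠ 0 := fun h => gne i (by rw [hgi, h])
      have hi0 : i = 0 := by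
        apply L1 a1 i 0 hin (by omega) ha1 ha10
        rw [pow_zero, mul_one]
        exact hgi
      have hb32 : b3 = 0 ∨ b2 = 0 := by
        rw [hb1', zero_mul] at q2
        rcases mul_eq_zero.mp q2.symm with h | h
        · exact absurd h hlam0
        · exact mul_eq_zero.mp h
      rcases hb32 with hb3' | hb2'
      · have hgi' : (g:F)^(i') = a3 := by rw [hx3, hb3']; ring
        have ha30 : a3 ≠ 0 := fun h => gne i' (by rw [hgi', h])
        have hi'0 : i' = 0 := by
          apply L1 a3 i' 0 hin' (by omega) ha3 ha30
          rw [pow_zero, mul_one]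
          exact hgi'
        refine ⟨by omega, ?_⟩
        -- cancel to get j' = j, then conclude
        have hcan : a1 * ((g:F)^(j')) = a1 * ((a1⁻¹ * (lam * a3)) * (g:F)^j) := by
          calc a1 * ((g:F)^(j')) = lam * ((g:F)^(i') * (g:F)^j) := by rw [← hgi]; exact hE0
          _ = a1 * ((a1⁻¹ * (lam * a3)) * (g:F)^j) := by
              rw [hgi']
              linear_combination (-(lam * a3 * (g:F)^j)) * (mul_inv_cancel₀ ha10)
        have := L1 (a1⁻¹ * (lam * a3)) j' j hjn' hjn
          (Kmul _ _ (Kinv _ ha1) (Kmul _ _ hKlam ha3))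
          (mul_ne_zero (inv_ne_zero ha10) (mul_ne_zero hlam0 ha30))
          (mul_left_cancel₀ ha10 hcan)
        omega
      · -- second column constant : j = 0 = i, contradiction
        have hgj : (g:F)^j = a2 := by rw [hx2, hb2']; ring
        have ha20 : a2 ≠ 0 := fun h => gne j (by rw [hgj, h])
        have hj0 : j = 0 := by
          apply L1 a2 j 0 hjn (by omega) ha2 ha20
          rw [pow_zero, mul_one]
          exact hgj
        omega
    · -- b1 ≠ 0 : evaluate at the root of the first factor
      set r : F := -(a1 * b1⁻¹) with hrdef
      have hbr : b1 * r = -a1 := by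
        rw [hrdef, mul_neg, mul_comm a1 b1⁻¹, ← mul_assoc, mul_inv_cancel₀ hb1', one_mul]
      have hr1 : a1 + b1 * r = 0 := by rw [hbr]; ring
      have hplug : (a1 + b1*r)*(a4 + b4*r) = lam*((a3 + b3*r)*(a2 + b2*r)) := by
        linear_combination q0 + r * q1 + r^2 * q2
      rw [hr1, zero_mul] at hplug
      have hsplit := (mul_eq_zero.mp hplug.symm).resolve_left hlam0
      rcases mul_eq_zero.mp hsplit with h3 | h2
      · -- x' proportional to x : i' = i
        have hprop : a3 * b1 = a1 * b3 := by linear_combination b1 * h3 - b3 * hbr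
        have hii' : i' = i := prop i' i a3 b3 a1 b1 hin' hin ha3 hb3 ha1 hb1 hx3 hx1 hprop
        refine ⟨hii'.symm, ?_⟩
        -- cancel g^i
        have hcan : (g:F)^i * ((g:F)^(j')) = (g:F)^i * (lam * (g:F)^j) := by
          rw [hE0, hii']
          ring
        have := L1 lam j' j hjn' hjn hKlam hlam0 (mul_left_cancel₀ (gne i) hcan)
        omega
      · -- y proportional to x : j = i, contradiction
        have hprop : a2 * b1 = a1 * b2 := by linear_combination b1 * h2 - b2 * hbr
        have := prop j i a2 b2 a1 b1 hjn hin ha2 hb2 ha1 hb1 hx2 hx1 hprop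
        omega
  -- Sidon modulo n
  have hSidon : ∀ i ∈ A, ∀ j ∈ A, ∀ i' ∈ A, ∀ j' ∈ A, i ≠ j →
      (i + j') % n = (i' + j) % n → i = i' ∧ j = j' := by
    intro i hi j hj i' hi' j' hj' hij hmod
    have hiln : i < n := ((memA i).mp hi).1
    have hjln : j < n := ((memA j).mp hj).1
    rcases le_or_gt (i' + j) (i + j') with hle | hlt
    · obtain ⟨t, ht⟩ := (Nat.modEq_iff_dvd' hle).mp (Nat.ModEq.symm hmod)
      exact core i j i' j' t hi hj hi' hj' hij (by omega)
    · have hij' : i' ≠ j' := by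
        rintro rfl
        have h2 : i + i' ≡ j + i' [MOD n] := by
          have : i' + j = j + i' := by omega
          rw [this] at hmod
          exact hmod
        have h3 := Nat.ModEq.add_right_cancel' i' h2
        rw [Nat.ModEq, Nat.mod_eq_of_lt hiln, Nat.mod_eq_of_lt hjln] at h3
        exact hij h3
      obtain ⟨t, ht⟩ := (Nat.modEq_iff_dvd' (le_of_lt hlt)).mp hmod
      have := core i' j' i j t hi' hj' hi hj hij' (by omega)
      exact ⟨this.1.symm, this.2.symm⟩
  
  have hAlt : ∀ i ∈ A, i < n := fun i hi => ((memA i).mp hi).1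
  set phi : ℕ × ℕ → ℕ := fun pr => (pr.1 + (n - pr.2)) % n with hphi
  have hphi_mem : ∀ pr ∈ A.offDiag, phi pr ∈ Ico 1 n := by
    intro pr hpr
    rw [mem_offDiag] at hpr
    obtain ⟨h1, h2, h12⟩ := hpr
    have hi := hAlt _ h1
    have hj := hAlt _ h2
    rw [mem_Ico]
    refine ⟨?_, Nat.mod_lt _ hnpos⟩
    by_contra h0
    push_neg at h0
    have h0' : phi pr = 0 := by omega
    obtain ⟨c, hc⟩ := Nat.dvd_of_mod_eq_zero h0'
    match c with
    | 0 => omega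
    | 1 => omega
    | (c+2) =>
      have hx : n * (c+2) = n*c + 2*n := by ring
      omega
  have hphi_inj : Set.InjOn phi ↑(A.offDiag) := by
    intro x hx y hy hxy
    simp only [mem_coe, mem_offDiag] at hx hy
    have hx2 := hAlt _ hx.2.1
    have hy2 := hAlt _ hy.2.1
    have hmod : (x.1 + y.2) % n = (y.1 + x.2) % n := by
      have h2 : (x.1 + (n - x.2) + (x.2 + y.2)) % n = (y.1 + (n - y.2) + (x.2 + y.2)) % n :=
        Nat.ModEq.add_right _ hxy
      have e1 : x.1 + (n - x.2) + (x.2 + y.2) = x.1 + y.2 + n := by omega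
      have e2 : y.1 + (n - y.2) + (x.2 + y.2) = y.1 + x.2 + n := by omega
      rw [e1, e2] at h2
      exact Nat.ModEq.add_right_cancel' n h2
    have := hSidon x.1 hx.1 x.2 hx.2.1 y.1 hy.1 y.2 hy.2.1 hx.2.2 hmod
    exact Prod.ext this.1 this.2
  have himg2 : A.offDiag.image phi = Ico 1 n := by
    apply eq_of_subset_of_card_le
    · intro x hx
      obtain ⟨pr, hpr, rfl⟩ := mem_image.mp hx
      exact hphi_mem pr hpr
    · rw [Nat.card_Ico, card_image_of_injOn hphi_inj, offDiag_card, cardA]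
      have e : (q+1) * (q+1) = q^2 + 2*q + 1 := by ring
      omega
  have h2img : (2:ℕ) ∈ A.offDiag.image phi := by
    rw [himg2, mem_Ico]
    omega
  obtain ⟨pr0, hpr0, hphi2⟩ := mem_image.mp h2img
  rw [mem_offDiag] at hpr0
  set t0 : ℕ := n - pr0.2 with ht0
  have hj0lt : pr0.2 < n := hAlt _ hpr0.2.1
  set B : Finset ℕ := A.image (fun i => (i + t0) % n) with hB
  have hBlt : ∀ b ∈ B, b < n := by
    intro b hb
    obtain ⟨a, _, rfl⟩ := mem_image.mp hb
    exact Nat.mod_lt _ hnpos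
  have etrans : ∀ a c : ℕ, ((a + t0) % n + (c + t0) % n) % n = ((a + c) + (t0 + t0)) % n := by
    intro a c
    rw [← Nat.add_mod]
    congr 1
    omega
  have hBS : ∀ b1 ∈ B, ∀ b2 ∈ B, ∀ b3 ∈ B, ∀ b4 ∈ B, b1 ≠ b2 →
      (b1 + b4) % n = (b3 + b2) % n → b1 = b3 ∧ b2 = b4 := by
    intro b1 hb1 b2 hb2 b3 hb3 b4 hb4 hne hmod
    obtain ⟨a1, ha1, rfl⟩ := mem_image.mp hb1
    obtain ⟨a2, ha2, rfl⟩ := mem_image.mp hb2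
    obtain ⟨a3, ha3, rfl⟩ := mem_image.mp hb3
    obtain ⟨a4, ha4, rfl⟩ := mem_image.mp hb4
    have hane : a1 ≠ a2 := fun h => hne (by rw [h])
    have key : (a1 + a4) % n = (a3 + a2) % n := by
      have h1 : ((a1+a4) + (t0+t0)) % n = ((a3+a2) + (t0+t0)) % n := by
        rw [← etrans a1 a4, ← etrans a3 a2]
        exact hmod
      exact Nat.ModEq.add_right_cancel' _ h1
    have := hSidon a1 ha1 a2 ha2 a3 ha3 a4 ha4 hane key
    rw [this.1, this.2]
    exact ⟨rfl, rfl⟩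
  have hBinj : ∀ a ∈ A, ∀ b ∈ A, (a + t0) % n = (b + t0) % n → a = b := by
    intro a ha b hb hab
    have h2 : a % n = b % n := Nat.ModEq.add_right_cancel' t0 hab
    rwa [Nat.mod_eq_of_lt (hAlt _ ha), Nat.mod_eq_of_lt (hAlt _ hb)] at h2
  have cardB : B.card = q + 1 := by
    rw [hB, card_image_of_injOn, cardA]
    intro a ha b hb hab
    exact hBinj a ha b hb hab
  have h0B : (0:ℕ) ∈ B := by
    rw [hB, mem_image]
    refine ⟨pr0.2, hpr0.2.1, ?_⟩
    have : pr0.2 + t0 = n := by omega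
    rw [this, Nat.mod_self]
  have h2B : (2:ℕ) ∈ B := by
    rw [hB, mem_image]
    exact ⟨pr0.1, hpr0.1, hphi2⟩
  have h1B : (1:ℕ) ∉ B := by
    intro h1
    have := hBS 1 h1 0 h0B 2 h2B 1 h1 (by omega) (by norm_num)
    omega
  refine ⟨B.image (fun r => if r = 0 then n else r), ?_, ?_, ?_, ?_, ?_⟩
  · rw [card_image_of_injOn, cardB]
    intro a ha b hb hab
    have ha' := hBlt _ ha
    have hb' := hBlt _ hb
    simp only at hab
    split_ifs at hab with h1 h2 h2 <;> omega
  · intro a ha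
    obtain ⟨r, hr, rfl⟩ := mem_image.mp ha
    have hr' := hBlt _ hr
    have hr1 : r ≠ 1 := fun h => h1B (h ▸ hr)
    split_ifs with h0
    · omega
    · omega
  · rw [mem_image]
    exact ⟨2, h2B, by norm_num⟩
  · rw [mem_image]
    exact ⟨0, h0B, by norm_num⟩
  · intro a ha b hb c hc d hd hab hcd hdiff
    -- facts about membership
    have hfact : ∀ x ∈ B.image (fun r => if r = 0 then n else r), 2 ≤ x ∧ x ≤ n ∧ x % n ∈ B := by
      intro x hx
      obtain ⟨r, hr, rfl⟩ := mem_image.mp hx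
      have hr' := hBlt _ hr
      have hr1 : r ≠ 1 := fun h => h1B (h ▸ hr)
      split_ifs with h0
      · refine ⟨by omega, le_refl n, ?_⟩
        rw [Nat.mod_self, ← h0]
        exact hr
      · refine ⟨by omega, by omega, ?_⟩
        rw [Nat.mod_eq_of_lt hr']
        exact hr
    obtain ⟨ha2, han, haB⟩ := hfact a ha
    obtain ⟨hb2, hbn, hbB⟩ := hfact b hb
    obtain ⟨hc2, hcn, hcB⟩ := hfact c hc
    obtain ⟨hd2, hdn, hdB⟩ := hfact d hd
    have hsum : b + c = d + a := by omega
    have hmod : (b % n + c % n) % n = (d % n + a % n) % n := by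
      rw [← Nat.add_mod, ← Nat.add_mod, hsum]
    have hbane : b % n ≠ a % n := by
      intro h
      have hdvd : n ∣ b - a := (Nat.modEq_iff_dvd' (by omega)).mp h.symm
      obtain ⟨c', hc'⟩ := hdvd
      match c' with
      | 0 => omega
      | (c'+1) =>
        have : n * (c'+1) = n*c' + n := by ring
        omega
    have hres := hBS (b % n) hbB (a % n) haB (d % n) hdB (c % n) hcB hbane hmod
    have hlift : ∀ x y : ℕ, 2 ≤ x → x ≤ n → 2 ≤ y → y ≤ n → x % n = y % n → x = y := by
      intro x y hx2 hxn hy2 hyn hxy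
      rcases eq_or_lt_of_le hxn with rfl | hxlt
      · rw [Nat.mod_self] at hxy
        rcases eq_or_lt_of_le hyn with rfl | hylt
        · rfl
        · rw [Nat.mod_eq_of_lt hylt] at hxy
          omega
      · rw [Nat.mod_eq_of_lt hxlt] at hxy
        rcases eq_or_lt_of_le hyn with rfl | hylt
        · rw [Nat.mod_self] at hxy
          omega
        · rw [Nat.mod_eq_of_lt hylt] at hxy
          omega
    exact ⟨hlift a c ha2 han hc2 hcn (by rw [hres.2]), hlift b d hb2 hbn hd2 hdn (by rw [hres.1])⟩

theorem exists_sidon (q : ℕ) (hq : IsPrimePow q) :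
    ∃ S : Finset ℕ, S.card = q + 1 ∧ (∀ a ∈ S, 2 ≤ a ∧ a ≤ q ^ 2 + q + 1) ∧
      2 ∈ S ∧ q ^ 2 + q + 1 ∈ S ∧
      (∀ a ∈ S, ∀ b ∈ S, ∀ c ∈ S, ∀ d ∈ S, a < b → c < d → b - a = d - c → a = c ∧ b = d) := by
  obtain ⟨p, k, hp, hk, rfl⟩ := hq
  haveI : Fact p.Prime := ⟨hp.nat_prime⟩
  haveI : Fintype (GaloisField p (3*k)) := Fintype.ofFinite _
  haveI : DecidableEq (GaloisField p (3*k)) := Classical.typeDecidableEq _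
  apply sidon_core (GaloisField p (3*k)) (p^k)
  · exact Nat.one_lt_pow (by omega) hp.nat_prime.two_le
  · have h := GaloisField.card p (3*k) (by omega)
    rw [Nat.card_eq_fintype_card] at h
    rw [h, ← pow_mul]
    congr 1
    omega
  · intro x y
    exact add_pow_char_pow ..

namespace PartB


variable {n : ℕ} {S : Finset ℕ}

lemma adj_char (u v : Fin n) :
    (GnS n S).Adj u v ↔ u ≠ v ∧
      ((u.val + 1) % n = v.val ∨ (v.val + 1) % n = u.val ∨
        (u.val = 0 ∧ v.val + 1 ∈ S) ∨ (v.val = 0 ∧ u.val + 1 ∈ S)) := by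
  simp only [GnS, SimpleGraph.fromRel_adj]
  tauto

lemma adj_nonzero {u v : Fin n} (hu : u.val ≠ 0) (hv : v.val ≠ 0) :
    (GnS n S).Adj u v ↔ (u.val + 1 = v.val ∨ v.val + 1 = u.val) := by
  rw [adj_char]
  constructor
  · rintro ⟨hne, (h | h | ⟨h0, _⟩ | ⟨h0, _⟩)⟩
    · left
      have hun := u.isLt
      have hvn := v.isLt
      rcases Nat.lt_or_ge (u.val + 1) n with h1 | h1
      · rw [Nat.mod_eq_of_lt h1] at h; exact h
      · have : u.val + 1 = n := by omega
        rw [this, Nat.mod_self] at h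
        omega
    · right
      have hun := u.isLt
      have hvn := v.isLt
      rcases Nat.lt_or_ge (v.val + 1) n with h1 | h1
      · rw [Nat.mod_eq_of_lt h1] at h; exact h
      · have : v.val + 1 = n := by omega
        rw [this, Nat.mod_self] at h
        omega
    · exact absurd h0 hu
    · exact absurd h0 hv
  · intro h
    have hun := u.isLt
    have hvn := v.isLt
    have hne : u ≠ v := by
      intro he
      rw [he] at h
      omega
    rcases h with h | h
    · exact ⟨hne, Or.inl (by rw [Nat.mod_eq_of_lt (by omega), h])⟩
    · exact ⟨hne, Or.inr (Or.inl (by rw [Nat.mod_eq_of_lt (by omega), h]))⟩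

lemma adj_zero (hn : 7 ≤ n) (hS2 : 2 ∈ S) (hSn : n ∈ S) {u v : Fin n} (hu : u.val = 0) :
    (GnS n S).Adj u v ↔ (v.val ≠ 0 ∧ v.val + 1 ∈ S) := by
  rw [adj_char]
  have hvn := v.isLt
  constructor
  · rintro ⟨hne, h⟩
    have hv0 : v.val ≠ 0 := by
      intro h0
      exact hne (Fin.ext (by omega)).symm
    refine ⟨hv0, ?_⟩
    rcases h with h | h | ⟨_, h⟩ | ⟨h0, _⟩
    · rw [hu, Nat.mod_eq_of_lt (by omega)] at h
      rw [← h]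
      exact hS2
    · rw [hu] at h
      have hdvd : n ∣ v.val + 1 := Nat.dvd_of_mod_eq_zero h
      have := Nat.le_of_dvd (by omega) hdvd
      have : v.val + 1 = n := by omega
      rw [this]
      exact hSn
    · exact h
    · exact absurd h0 hv0
  · rintro ⟨hv0, hvS⟩
    refine ⟨fun he => hv0 (by rw [← he, hu]), Or.inr (Or.inr (Or.inl ⟨hu, hvS⟩))⟩

lemma walk_interval (hn : 7 ≤ n) {x y : Fin n} (w : (GnS n S).Walk x y)
    (hnd : w.support.Nodup) (h0 : ∀ v ∈ w.support, v.val ≠ 0) :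
    (w.length = max x.val y.val - min x.val y.val) ∧
    (∀ t : ℕ, min x.val y.val ≤ t → t ≤ max x.val y.val → ∃ v ∈ w.support, v.val = t) ∧
    (∀ e, e ∈ w.edges ↔ ∃ u v : Fin n, u.val + 1 = v.val ∧
      min x.val y.val ≤ u.val ∧ v.val ≤ max x.val y.val ∧ e = s(u, v)) := by
  induction w with
  | nil =>
    rename_i v
    refine ⟨by simp, ?_, ?_⟩
    · intro t ht1 ht2
      exact ⟨v, by simp, by omega⟩
    · intro e
      simp only [SimpleGraph.Walk.edges_nil, List.not_mem_nil, false_iff, not_exists]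
      rintro u v ⟨h1, h2, h3, _⟩
      omega
  | @cons a b c h w ih =>
    have hnd' : w.support.Nodup := by
      rw [SimpleGraph.Walk.support_cons] at hnd
      exact (List.nodup_cons.mp hnd).2
    have hna : a ∉ w.support := by
      rw [SimpleGraph.Walk.support_cons] at hnd
      exact (List.nodup_cons.mp hnd).1
    have h0' : ∀ v ∈ w.support, v.val ≠ 0 := by
      intro v hv
      exact h0 v (by rw [SimpleGraph.Walk.support_cons]; exact List.mem_cons_of_mem _ hv)
    have ha0 : a.val ≠ 0 := h0 a (by rw [SimpleGraph.Walk.support_cons]; exact List.mem_cons_self)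
    have hb0 : b.val ≠ 0 := h0' b (SimpleGraph.Walk.start_mem_support w)
    obtain ⟨ihl, ihs, ihe⟩ := ih hnd' h0'
    have hab := (adj_nonzero ha0 hb0).mp h
    have han := a.isLt
    have hbn := b.isLt
    have hcn := c.isLt
    rcases hab with hab | hab
    · -- a + 1 = b : going up
      have hbc : b.val ≤ c.val := by
        by_contra hbc
        push_neg at hbc
        obtain ⟨v, hv, hvval⟩ := ihs a.val (by omega) (by omega)
        exact hna (by rwa [show v = a from Fin.ext hvval] at hv)
      have hmin : min a.val c.val = a.val := by omega
      have hmax : max a.val c.val = c.val := by omega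
      have hmin' : min b.val c.val = b.val := by omega
      have hmax' : max b.val c.val = c.val := by omega
      rw [hmin', hmax'] at ihl ihs ihe
      refine ⟨?_, ?_, ?_⟩
      · rw [SimpleGraph.Walk.length_cons, hmin, hmax]; omega
      · intro t ht1 ht2
        rw [hmin] at ht1
        rw [hmax] at ht2
        rcases eq_or_lt_of_le ht1 with rfl | hlt
        · exact ⟨a, by simp [SimpleGraph.Walk.support_cons], rfl⟩
        · obtain ⟨v, hv, hvv⟩ := ihs t (by omega) (by omega)
          exact ⟨v, by rw [SimpleGraph.Walk.support_cons]; exact List.mem_cons_of_mem _ hv, hvv⟩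
      · intro e
        rw [SimpleGraph.Walk.edges_cons, List.mem_cons, ihe, hmin, hmax]
        constructor
        · rintro (rfl | ⟨u, v, h1, h2, h3, rfl⟩)
          · exact ⟨a, b, hab, by omega, by omega, rfl⟩
          · exact ⟨u, v, h1, by omega, h3, rfl⟩
        · rintro ⟨u, v, h1, h2, h3, rfl⟩
          rcases eq_or_lt_of_le h2 with heq | hlt
          · left
            have hu : u = a := Fin.ext heq.symm
            have hv : v = b := Fin.ext (by omega)
            rw [hu, hv]
          · right
            exact ⟨u, v, h1, by omega, h3, rfl⟩
    · -- b + 1 = a : going down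
      have hcb : c.val ≤ b.val := by
        by_contra hcb
        push_neg at hcb
        obtain ⟨v, hv, hvval⟩ := ihs a.val (by omega) (by omega)
        exact hna (by rwa [show v = a from Fin.ext hvval] at hv)
      have hmin : min a.val c.val = c.val := by omega
      have hmax : max a.val c.val = a.val := by omega
      have hmin' : min b.val c.val = c.val := by omega
      have hmax' : max b.val c.val = b.val := by omega
      rw [hmin', hmax'] at ihl ihs ihe
      refine ⟨?_, ?_, ?_⟩
      · rw [SimpleGraph.Walk.length_cons, hmin, hmax]; omega
      · intro t ht1 ht2
        rw [hmin] at ht1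
        rw [hmax] at ht2
        rcases eq_or_lt_of_le ht2 with rfl | hlt
        · exact ⟨a, by simp [SimpleGraph.Walk.support_cons], rfl⟩
        · obtain ⟨v, hv, hvv⟩ := ihs t (by omega) (by omega)
          exact ⟨v, by rw [SimpleGraph.Walk.support_cons]; exact List.mem_cons_of_mem _ hv, hvv⟩
      · intro e
        rw [SimpleGraph.Walk.edges_cons, List.mem_cons, ihe, hmin, hmax]
        constructor
        · rintro (rfl | ⟨u, v, h1, h2, h3, rfl⟩)
          · exact ⟨b, a, hab, by omega, by omega, Sym2.eq_swap⟩
          · exact ⟨u, v, h1, h2, by omega, rfl⟩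
        · rintro ⟨u, v, h1, h2, h3, rfl⟩
          rcases eq_or_lt_of_le h3 with heq | hlt
          · left
            have hv : v = a := Fin.ext heq
            have hu : u = b := Fin.ext (by omega)
            rw [hu, hv]
            exact Sym2.eq_swap
          · right
            exact ⟨u, v, h1, h2, by omega, rfl⟩

lemma cycle_zero (hn : 7 ≤ n) {u : Fin n} (p : (GnS n S).Walk u u) (hp : p.IsCycle) :
    ∃ v ∈ p.support, v.val = 0 := by
  by_contra hc
  push_neg at hc
  cases p with
  | nil => exact hp.ne_nil rfl
  | @cons _ z _ h w =>
    obtain ⟨hpath, hedge⟩ := (SimpleGraph.Walk.cons_isCycle_iff w h).mp hp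
    have hsup : ∀ v ∈ w.support, v.val ≠ 0 := by
      intro v hv
      exact hc v (by rw [SimpleGraph.Walk.support_cons]; exact List.mem_cons_of_mem _ hv)
    have hu0 : u.val ≠ 0 := hc u (SimpleGraph.Walk.start_mem_support _)
    have hz0 : z.val ≠ 0 := hsup z (SimpleGraph.Walk.start_mem_support w)
    obtain ⟨_, _, hedges⟩ := walk_interval hn w hpath.support_nodup hsup
    rcases (adj_nonzero hu0 hz0).mp h with h1 | h1
    · exact hedge ((hedges s(u, z)).mpr ⟨u, z, h1, min_le_right _ _, le_max_left _ _, rfl⟩)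
    · exact hedge ((hedges s(u, z)).mpr ⟨z, u, h1, min_le_left _ _, le_max_right _ _, Sym2.eq_swap⟩)

lemma cycle_struct (hn : 7 ≤ n) (hS2 : 2 ∈ S) (hSn : n ∈ S) {z0 : Fin n} (hz0 : z0.val = 0)
    (p : (GnS n S).Walk z0 z0) (hp : p.IsCycle) :
    ∃ x y : Fin n, x.val < y.val ∧ x.val + 1 ∈ S ∧ y.val + 1 ∈ S ∧
      p.length = y.val - x.val + 2 ∧
      (∀ e, e ∈ p.edges ↔ (e = s(z0, x) ∨ e = s(z0, y) ∨
        ∃ u v : Fin n, u.val + 1 = v.val ∧ x.val ≤ u.val ∧ v.val ≤ y.val ∧ e = s(u, v))) := by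
  cases p with
  | nil => exact absurd rfl hp.ne_nil
  | @cons _ x1 _ h p1 =>
    obtain ⟨hpath, hedge⟩ := (SimpleGraph.Walk.cons_isCycle_iff p1 h).mp hp
    obtain ⟨y2, h2, w2, hw2⟩ := SimpleGraph.Walk.not_nil_iff.mp
      (SimpleGraph.Walk.not_nil_of_ne (show z0 ≠ x1 from h.ne) (p := p1.reverse))
    obtain ⟨hx10, hx1S⟩ := (adj_zero hn hS2 hSn hz0).mp h
    obtain ⟨hy20, hy2S⟩ := (adj_zero hn hS2 hSn hz0).mp h2
    have hrnd := (hpath.reverse).support_nodup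
    rw [hw2, SimpleGraph.Walk.support_cons, List.nodup_cons] at hrnd
    obtain ⟨hz0w2, hw2nd⟩ := hrnd
    have hw2nz : ∀ v ∈ w2.support, v.val ≠ 0 := by
      intro v hv hv0
      exact hz0w2 (by rwa [show z0 = v from Fin.ext (by rw [hz0, hv0])])
    obtain ⟨hl, hs, he⟩ := walk_interval hn w2 hw2nd hw2nz
    have hp1len : p1.length = w2.length + 1 := by
      have h3 : p1.reverse.length = p1.length := SimpleGraph.Walk.length_reverse _
      rw [hw2, SimpleGraph.Walk.length_cons] at h3
      omega
    have hplen : (SimpleGraph.Walk.cons h p1).length = w2.length + 2 := by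
      rw [SimpleGraph.Walk.length_cons]
      omega
    have hpe : ∀ e, e ∈ (SimpleGraph.Walk.cons h p1).edges ↔
        (e = s(z0, x1) ∨ e = s(z0, y2) ∨ e ∈ w2.edges) := by
      intro e
      rw [SimpleGraph.Walk.edges_cons, List.mem_cons]
      have h4 : e ∈ p1.edges ↔ e ∈ p1.reverse.edges := by
        rw [SimpleGraph.Walk.edges_reverse, List.mem_reverse]
      rw [h4, hw2, SimpleGraph.Walk.edges_cons, List.mem_cons]
    have hne12 : x1.val ≠ y2.val := by
      intro hv
      have : y2 = x1 := Fin.ext hv.symm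
      subst this
      have : w2.length = 0 := by rw [hl]; omega
      have h5 := hp.three_le_length
      rw [hplen] at h5
      omega
    rcases Nat.lt_or_ge x1.val y2.val with hlt | hge
    · have hmin : min y2.val x1.val = x1.val := by omega
      have hmax : max y2.val x1.val = y2.val := by omega
      rw [hmin, hmax] at hl he
      refine ⟨x1, y2, hlt, hx1S, hy2S, by omega, fun e => ?_⟩
      rw [hpe e, he e]
    · have hmin : min y2.val x1.val = y2.val := by omega
      have hmax : max y2.val x1.val = x1.val := by omega
      rw [hmin, hmax] at hl he
      refine ⟨y2, x1, by omega, hy2S, hx1S, by omega, fun e => ?_⟩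
      rw [hpe e, he e]
      tauto

lemma cycle_desc (hn : 7 ≤ n) (hS2 : 2 ∈ S) (hSn : n ∈ S)
    {u : Fin n} (p : (GnS n S).Walk u u) (hp : p.IsCycle) :
    ∃ x y : Fin n, x.val < y.val ∧ x.val + 1 ∈ S ∧ y.val + 1 ∈ S ∧
      p.length = y.val - x.val + 2 ∧
      (∀ e, e ∈ p.edges ↔ (e = s(⟨0, Nat.lt_of_lt_of_le (by norm_num) hn⟩, x) ∨
        e = s(⟨0, Nat.lt_of_lt_of_le (by norm_num) hn⟩, y) ∨
        ∃ u' v' : Fin n, u'.val + 1 = v'.val ∧ x.val ≤ u'.val ∧ v'.val ≤ y.val ∧ e = s(u', v'))) := by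
  obtain ⟨z, hzmem, hzval⟩ := cycle_zero hn p hp
  have hzz : z = (⟨0, Nat.lt_of_lt_of_le (by norm_num) hn⟩ : Fin n) := Fin.ext hzval
  subst hzz
  have hp' : (p.rotate _ hzmem).IsCycle := hp.rotate hzmem
  obtain ⟨x, y, h1, h2, h3, h4, h5⟩ := cycle_struct hn hS2 hSn rfl (p.rotate _ hzmem) hp'
  have hrot := SimpleGraph.Walk.rotate_edges p _ hzmem
  refine ⟨x, y, h1, h2, h3, ?_, ?_⟩
  · have e1 : (p.rotate _ hzmem).edges.length = p.edges.length := hrot.perm.length_eq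
    rw [SimpleGraph.Walk.length_edges, SimpleGraph.Walk.length_edges] at e1
    omega
  · intro e
    rw [← h5 e]
    exact hrot.mem_iff.symm

lemma noRepeat (hn : 7 ≤ n) (hS2 : 2 ∈ S) (hSn : n ∈ S)
    (hb : ∀ a ∈ S, 2 ≤ a ∧ a ≤ n)
    (hSidon : ∀ a ∈ S, ∀ b ∈ S, ∀ c ∈ S, ∀ d ∈ S,
      a < b → c < d → b - a = d - c → a = c ∧ b = d) :
    ∀ (u v : Fin n) (p : (GnS n S).Walk u u) (q : (GnS n S).Walk v v),
      p.IsCycle → q.IsCycle → p.length = q.length →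
      {e | e ∈ p.edges} = {e | e ∈ q.edges} := by
  intro u v p q hp hq hlen
  obtain ⟨x, y, hxy, hxS, hyS, hplen, hpe⟩ := cycle_desc hn hS2 hSn p hp
  obtain ⟨x', y', hxy', hxS', hyS', hqlen, hqe⟩ := cycle_desc hn hS2 hSn q hq
  have heq := hSidon (x.val+1) hxS (y.val+1) hyS (x'.val+1) hxS' (y'.val+1) hyS'
    (by omega) (by omega) (by omega)
  have hx : x = x' := Fin.ext (by omega)
  have hy : y = y' := Fin.ext (by omega)
  subst hx
  subst hy
  ext e
  simp only [Set.mem_setOf_eq]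
  rw [hpe e, hqe e]

lemma adj_mk (hn : 7 ≤ n) {a b : ℕ} (ha : a < n) (hb : b < n) (h : (a+1) % n = b) :
    (GnS n S).Adj ⟨a, ha⟩ ⟨b, hb⟩ := by
  rw [adj_char]
  have hne : a ≠ b := by
    rcases Nat.lt_or_ge (a+1) n with h1 | h1
    · rw [Nat.mod_eq_of_lt h1] at h
      omega
    · have h2 : a + 1 = n := by omega
      rw [h2, Nat.mod_self] at h
      omega
  exact ⟨fun he => hne (by rw [Fin.mk.injEq] at he; exact he), Or.inl h⟩

def upWalk (hn : 7 ≤ n) :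
    (m : ℕ) → m < n → (GnS n S).Walk ⟨n - 1 - m, by omega⟩ ⟨0, by omega⟩
  | 0, _ => SimpleGraph.Walk.cons
      (adj_mk hn (by omega) (by omega)
        (by rw [show n-1-0+1 = n by omega, Nat.mod_self]))
      SimpleGraph.Walk.nil
  | (m+1), hm => SimpleGraph.Walk.cons
      (adj_mk hn (by omega) (by omega)
        (by rw [Nat.mod_eq_of_lt (show n-1-(m+1)+1 < n by omega)]; omega))
      (upWalk hn m (by omega))

lemma upWalk_props (hn : 7 ≤ n) : ∀ (m : ℕ) (hm : m < n),
    ((upWalk (S:=S) hn m hm).length = m + 1) ∧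
    (∀ v ∈ (upWalk (S:=S) hn m hm).support, v.val = 0 ∨ (n-1-m ≤ v.val ∧ v.val ≤ n-1)) ∧
    (m < n - 1 → (upWalk (S:=S) hn m hm).support.Nodup) ∧
    (∀ e ∈ (upWalk (S:=S) hn m hm).edges, ∃ u v : Fin n, e = s(u,v) ∧
      ((u.val = n-1 ∧ v.val = 0) ∨ (u.val+1 = v.val ∧ n-1-m ≤ u.val ∧ v.val ≤ n-1))) := by
  have hval : ∀ (a : ℕ) (h : a < n), ((⟨a, h⟩ : Fin n) : ℕ) = a := fun a h => rfl
  intro m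
  induction m with
  | zero =>
    intro hm
    refine ⟨by simp [upWalk], ?_, ?_, ?_⟩
    · intro v hv
      simp only [upWalk, SimpleGraph.Walk.support_cons, SimpleGraph.Walk.support_nil,
        List.mem_cons, List.mem_singleton] at hv
      rcases hv with rfl | rfl | h
      · right
        simp only [hval]
        omega
      · left
        rfl
      · exact absurd h List.not_mem_nil
    · intro _
      simp only [upWalk, SimpleGraph.Walk.support_cons, SimpleGraph.Walk.support_nil]
      refine List.nodup_cons.mpr ⟨?_, List.nodup_singleton _⟩
      simp only [List.mem_singleton]
      intro h
      rw [Fin.mk.injEq] at h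
      omega
    · intro e he
      simp only [upWalk, SimpleGraph.Walk.edges_cons, SimpleGraph.Walk.edges_nil,
        List.mem_singleton, List.mem_cons] at he
      rcases he with rfl | h
      · refine ⟨_, _, rfl, Or.inl ⟨?_, rfl⟩⟩
        simp only [hval]
        omega
      · exact absurd h List.not_mem_nil
  | succ m ih =>
    intro hm
    obtain ⟨ihl, ihsup, ihnd, ihe⟩ := ih (by omega)
    refine ⟨?_, ?_, ?_, ?_⟩
    · simp only [upWalk, SimpleGraph.Walk.length_cons]
      omega
    · intro v hv
      simp only [upWalk, SimpleGraph.Walk.support_cons, List.mem_cons] at hv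
      rcases hv with rfl | hv
      · right
        simp only [hval]
        omega
      · rcases ihsup v hv with h | h
        · left; exact h
        · right; omega
    · intro hlt
      simp only [upWalk, SimpleGraph.Walk.support_cons]
      refine List.nodup_cons.mpr ⟨?_, ihnd (by omega)⟩
      intro hmem
      rcases ihsup _ hmem with h | h
      · simp only [hval] at h
        omega
      · simp only [hval] at h
        omega
    · intro e he
      simp only [upWalk, SimpleGraph.Walk.edges_cons, List.mem_cons] at he
      rcases he with rfl | he
      · refine ⟨_, _, rfl, Or.inr ?_⟩
        simp only [hval]
        omega
      · obtain ⟨u', v', rfl, h⟩ := ihe e he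
        exact ⟨u', v', rfl, by omega⟩

lemma hamiltonian (hn : 7 ≤ n) :
    ∃ (u : Fin n) (p : (GnS n S).Walk u u), p.IsCycle ∧ p.length = n := by
  have hval : ∀ (a : ℕ) (h : a < n), ((⟨a, h⟩ : Fin n) : ℕ) = a := fun a h => rfl
  have h12 : n - 2 < n := by omega
  obtain ⟨hl, hsup, hnd, he⟩ := upWalk_props (S:=S) hn (n-2) h12
  have hadj : (GnS n S).Adj ⟨0, by omega⟩ ⟨1, by omega⟩ :=
    adj_mk hn (by omega) (by omega) (by rw [Nat.mod_eq_of_lt (by omega)])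
  refine ⟨⟨0, by omega⟩, SimpleGraph.Walk.cons hadj
    ((upWalk (S:=S) hn (n-2) h12).copy (Fin.ext (by simp only [hval]; omega)) rfl), ?_, ?_⟩
  · rw [SimpleGraph.Walk.cons_isCycle_iff]
    constructor
    · apply SimpleGraph.Walk.IsPath.mk'
      rw [SimpleGraph.Walk.support_copy]
      exact hnd (by omega)
    · rw [SimpleGraph.Walk.edges_copy]
      intro hmem
      obtain ⟨u', v', heq, hcase⟩ := he _ hmem
      rcases Sym2.eq_iff.mp heq with ⟨h1, h2⟩ | ⟨h1, h2⟩
      · have e1 := congrArg Fin.val h1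
        have e2 := congrArg Fin.val h2
        simp only [hval] at e1 e2
        omega
      · have e1 := congrArg Fin.val h1
        have e2 := congrArg Fin.val h2
        simp only [hval] at e1 e2
        omega
  · rw [SimpleGraph.Walk.length_cons, SimpleGraph.Walk.length_copy, hl]
    omega

lemma edge_count (hn : 7 ≤ n) (hS2 : 2 ∈ S) (hSn : n ∈ S)
    (hb : ∀ a ∈ S, 2 ≤ a ∧ a ≤ n) :
    (GnS n S).edgeSet.ncard = n + (S.card - 2) := by
  classical
  have hval : ∀ (a : ℕ) (h : a < n), ((⟨a, h⟩ : Fin n) : ℕ) = a := fun a h => rfl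
  set E1 : Finset (Sym2 (Fin n)) := (univ : Finset (Fin n)).image
    (fun i => s(i, (⟨(i.val+1) % n, Nat.mod_lt _ (by omega)⟩ : Fin n))) with hE1
  set E2 : Finset (Sym2 (Fin n)) := (S.filter (fun a => 2 < a ∧ a < n)).image
    (fun a => s((⟨0, by omega⟩ : Fin n), (⟨(a-1) % n, Nat.mod_lt _ (by omega)⟩ : Fin n))) with hE2
  have hEq : (GnS n S).edgeSet = ↑(E1 ∪ E2) := by
    ext e
    induction e using Sym2.ind with
    | _ u v =>
      rw [SimpleGraph.mem_edgeSet, Finset.coe_union, Set.mem_union, Finset.mem_coe,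
        Finset.mem_coe, adj_char]
      have hun := u.isLt
      have hvn := v.isLt
      constructor
      · rintro ⟨hne, h⟩
        have hne' : u.val ≠ v.val := fun h => hne (Fin.ext h)
        rcases h with h | h | ⟨h0, hS⟩ | ⟨h0, hS⟩
        · left
          rw [hE1, Finset.mem_image]
          refine ⟨u, Finset.mem_univ u, ?_⟩
          rw [Sym2.eq_iff]
          left
          exact ⟨rfl, Fin.ext (by rw [hval, h])⟩
        · left
          rw [hE1, Finset.mem_image]
          refine ⟨v, Finset.mem_univ v, ?_⟩
          rw [Sym2.eq_iff]
          right
          exact ⟨rfl, Fin.ext (by rw [hval, h])⟩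
        · -- chord from u (val 0)
          have hv0 : v.val ≠ 0 := by omega
          rcases Nat.lt_or_ge 1 v.val with hv1 | hv1
          · rcases Nat.lt_or_ge v.val (n-1) with hv2 | hv2
            · right
              rw [hE2, Finset.mem_image]
              refine ⟨v.val + 1, Finset.mem_filter.mpr ⟨hS, by omega, by omega⟩, ?_⟩
              rw [Sym2.eq_iff]
              left
              constructor
              · exact (Fin.ext (a := u) (b := ⟨0, by omega⟩) h0).symm
              · exact Fin.ext (by rw [hval, Nat.mod_eq_of_lt (by omega)]; omega)
            · left
              rw [hE1, Finset.mem_image]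
              refine ⟨v, Finset.mem_univ v, ?_⟩
              rw [Sym2.eq_iff]
              right
              refine ⟨rfl, Fin.ext ?_⟩
              rw [hval]
              have h5 : v.val + 1 = n := by omega
              rw [h5, Nat.mod_self, h0]
          · left
            rw [hE1, Finset.mem_image]
            refine ⟨u, Finset.mem_univ u, ?_⟩
            rw [Sym2.eq_iff]
            left
            refine ⟨rfl, Fin.ext ?_⟩
            rw [hval, h0, Nat.mod_eq_of_lt (by omega)]
            omega
        · -- chord from v (val 0)
          have hu0 : u.val ≠ 0 := by omega
          rcases Nat.lt_or_ge 1 u.val with hu1 | hu1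
          · rcases Nat.lt_or_ge u.val (n-1) with hu2 | hu2
            · right
              rw [hE2, Finset.mem_image]
              refine ⟨u.val + 1, Finset.mem_filter.mpr ⟨hS, by omega, by omega⟩, ?_⟩
              rw [Sym2.eq_iff]
              right
              constructor
              · exact (Fin.ext (a := v) (b := ⟨0, by omega⟩) h0).symm
              · exact Fin.ext (by rw [hval, Nat.mod_eq_of_lt (by omega)]; omega)
            · left
              rw [hE1, Finset.mem_image]
              refine ⟨u, Finset.mem_univ u, ?_⟩
              rw [Sym2.eq_iff]
              left
              refine ⟨rfl, Fin.ext ?_⟩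
              rw [hval]
              have h5 : u.val + 1 = n := by omega
              rw [h5, Nat.mod_self, h0]
          · left
            rw [hE1, Finset.mem_image]
            refine ⟨v, Finset.mem_univ v, ?_⟩
            rw [Sym2.eq_iff]
            right
            refine ⟨rfl, Fin.ext ?_⟩
            rw [hval, h0, Nat.mod_eq_of_lt (by omega)]
            omega
      · rintro (h | h)
        · rw [hE1, Finset.mem_image] at h
          obtain ⟨i, _, hi⟩ := h
          have hiin := i.isLt
          rcases Sym2.eq_iff.mp hi with ⟨h1, h2⟩ | ⟨h1, h2⟩
          · have e1 := congrArg Fin.val h1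
            have e2 := congrArg Fin.val h2
            rw [hval] at e2
            rw [e1] at e2
            refine ⟨?_, Or.inl e2⟩
            intro he
            have e3 := congrArg Fin.val he
            rcases Nat.lt_or_ge (u.val+1) n with h3 | h3
            · rw [Nat.mod_eq_of_lt h3] at e2
              omega
            · have h4 : u.val + 1 = n := by omega
              rw [h4, Nat.mod_self] at e2
              omega
          · have e1 := congrArg Fin.val h1
            have e2 := congrArg Fin.val h2
            rw [hval] at e2
            rw [e1] at e2
            refine ⟨?_, Or.inr (Or.inl e2)⟩
            intro he
            have e3 := congrArg Fin.val he
            rcases Nat.lt_or_ge (v.val+1) n with h3 | h3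
            · rw [Nat.mod_eq_of_lt h3] at e2
              omega
            · have h4 : v.val + 1 = n := by omega
              rw [h4, Nat.mod_self] at e2
              omega
        · rw [hE2, Finset.mem_image] at h
          obtain ⟨a, ha, hi⟩ := h
          rw [Finset.mem_filter] at ha
          obtain ⟨haS, ha2, han⟩ := ha
          have hmod : (a-1) % n = a - 1 := Nat.mod_eq_of_lt (by omega)
          rcases Sym2.eq_iff.mp hi with ⟨h1, h2⟩ | ⟨h1, h2⟩
          · have e1 := congrArg Fin.val h1
            have e2 := congrArg Fin.val h2
            rw [hval] at e1
            rw [hval, hmod] at e2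
            refine ⟨?_, Or.inr (Or.inr (Or.inl ⟨e1.symm, ?_⟩))⟩
            · intro he
              have e3 := congrArg Fin.val he
              omega
            · have h5 : v.val + 1 = a := by omega
              rw [h5]
              exact haS
          · have e1 := congrArg Fin.val h1
            have e2 := congrArg Fin.val h2
            rw [hval] at e1
            rw [hval, hmod] at e2
            refine ⟨?_, Or.inr (Or.inr (Or.inr ⟨e1.symm, ?_⟩))⟩
            · intro he
              have e3 := congrArg Fin.val he
              omega
            · have h5 : u.val + 1 = a := by omega
              rw [h5]
              exact haS
  rw [hEq, Set.ncard_coe_finset, Finset.card_union_of_disjoint]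
  · -- cards
    have hc1 : E1.card = n := by
      rw [hE1, Finset.card_image_of_injOn, Finset.card_univ, Fintype.card_fin]
      intro i _ j _ hij
      rcases Sym2.eq_iff.mp hij with ⟨h1, _⟩ | ⟨h1, h2⟩
      · exact h1
      · have e1 : (i : ℕ) = (j.val + 1) % n := congrArg Fin.val h1
        have e2 : (i.val + 1) % n = (j : ℕ) := congrArg Fin.val h2
        have hin := i.isLt
        have hjn := j.isLt
        exfalso
        rcases Nat.lt_or_ge (j.val+1) n with h3 | h3
        · rw [Nat.mod_eq_of_lt h3] at e1
          rcases Nat.lt_or_ge (i.val+1) n with h4 | h4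
          · rw [Nat.mod_eq_of_lt h4] at e2
            omega
          · have h5 : i.val + 1 = n := by omega
            rw [h5, Nat.mod_self] at e2
            omega
        · have h5 : j.val + 1 = n := by omega
          rw [h5, Nat.mod_self] at e1
          rcases Nat.lt_or_ge (i.val+1) n with h4 | h4
          · rw [Nat.mod_eq_of_lt h4] at e2
            omega
          · have h6 : i.val + 1 = n := by omega
            rw [h6, Nat.mod_self] at e2
            omega
    have hc2 : E2.card = S.card - 2 := by
      rw [hE2, Finset.card_image_of_injOn]
      · have hfe : S.filter (fun a => 2 < a ∧ a < n) = (S.erase n).erase 2 := by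
          ext a
          simp only [Finset.mem_filter, Finset.mem_erase]
          constructor
          · rintro ⟨h1, h2, h3⟩
            exact ⟨by omega, by omega, h1⟩
          · rintro ⟨h1, h2, h3⟩
            have := hb a h3
            exact ⟨h3, by omega, by omega⟩
        rw [hfe, Finset.card_erase_of_mem, Finset.card_erase_of_mem hSn]
        · omega
        · rw [Finset.mem_erase]
          exact ⟨by omega, hS2⟩
      · intro a ha b hb' hab
        rw [Finset.coe_filter] at ha hb'
        simp only [Set.mem_setOf_eq] at ha hb'
        rcases Sym2.eq_iff.mp hab with ⟨_, h2⟩ | ⟨h1, h2⟩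
        · have e2 := congrArg Fin.val h2
          rw [hval, hval, Nat.mod_eq_of_lt (by omega), Nat.mod_eq_of_lt (by omega)] at e2
          omega
        · have e1 := congrArg Fin.val h1
          rw [hval, hval, Nat.mod_eq_of_lt (by omega)] at e1
          omega
    rw [hc1, hc2]
  · -- disjoint
    rw [Finset.disjoint_left]
    intro e he1 he2
    rw [hE1, Finset.mem_image] at he1
    rw [hE2, Finset.mem_image] at he2
    obtain ⟨i, _, hi⟩ := he1
    obtain ⟨a, ha, hae⟩ := he2
    rw [Finset.mem_filter] at ha
    obtain ⟨haS, ha2, han⟩ := ha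
    have hmod : (a-1) % n = a - 1 := Nat.mod_eq_of_lt (by omega)
    rw [← hi] at hae
    have hin := i.isLt
    rcases Sym2.eq_iff.mp hae with ⟨h1, h2⟩ | ⟨h1, h2⟩
    · have e1 : (0 : ℕ) = (i : ℕ) := congrArg Fin.val h1
      have e2 : (a - 1) % n = (i.val + 1) % n := congrArg Fin.val h2
      rw [hmod, ← e1, Nat.mod_eq_of_lt (by omega)] at e2
      omega
    · have e1 : (0 : ℕ) = (i.val + 1) % n := congrArg Fin.val h1
      have e2 : (a - 1) % n = (i : ℕ) := congrArg Fin.val h2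
      rw [hmod] at e2
      rcases Nat.lt_or_ge (i.val+1) n with h3 | h3
      · rw [Nat.mod_eq_of_lt h3] at e1
        omega
      · have h4 : i.val + 1 = n := by omega
        omega


end PartB

/-- For every prime power `q`, there is a Hamiltonian graph on `q^2 + q + 1` vertices with
exactly `q^2 + 2q` edges in which no two cycles have the same length. -/
theorem stmt2 (q : ℕ) (hq : IsPrimePow q) :
    ∃ G : SimpleGraph (Fin (q ^ 2 + q + 1)),
      G.edgeSet.ncard = q ^ 2 + 2 * q ∧ IsHamiltonianGraph G ∧ NoRepeatedCycleLength G := by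
  obtain ⟨S, hcard, hb, hS2, hSn, hSidon⟩ := exists_sidon q hq
  have hq2 : 2 ≤ q := hq.two_le
  have hn : 7 ≤ q ^ 2 + q + 1 := by nlinarith
  refine ⟨GnS (q ^ 2 + q + 1) S, ?_, ?_, ?_⟩
  · rw [PartB.edge_count hn hS2 hSn hb, hcard]
    omega
  · obtain ⟨u, p, hc, hl⟩ := PartB.hamiltonian (S := S) hn
    exact ⟨u, p, hc, by rw [hl, Fintype.card_fin]⟩
  · exact PartB.noRepeat hn hS2 hSn hb hSidon
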